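/- arXiv:2007.03509 — 5 statements merged into one kernel-verified Lean document; each statement's English description precedes it below -/
import Mathlib

section
/- Let f : ℝᵈ → ℝ be differentiable and L-smooth, ω a point with ⟨ω−x, ∇f(x)⟩ ≤ f(ω) − f(x) − (μ/2)‖x−ω‖² for 0 ≤ μ ≤ L, and let ℓ* ≤ f(x⁺) be a lower bound on f with f(ω) − ℓ* ≤ ε. For η = 1/L and x⁺ = x − η∇f(x), we have ‖x⁺ − ω‖² ≤ (1 − μ/L)‖x − ω‖² + 2ηε. -/
set_option maxHeartbeats 1000000


open RealInnerProductSpace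

theorem stmt_3 (d : ℕ) (f : EuclideanSpace ℝ (Fin d) → ℝ) (L μ ε : ℝ) (hL : 0 < L)
    (hμ0 : 0 ≤ μ) (hμL : μ ≤ L) (hε : 0 ≤ ε)
    (hdiff : Differentiable ℝ f)
    (hsmooth : ∀ x y, f x ≤ f y + ⟪x - y, gradient f y⟫ + (L / 2) * ‖x - y‖ ^ 2)
    (x ω : EuclideanSpace ℝ (Fin d)) (ℓstar : ℝ)
    (hconv : ⟪ω - x, gradient f x⟫ ≤ f ω - f x - (μ / 2) * ‖x - ω‖ ^ 2)
    (η : ℝ) (hη : η = 1 / L)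
    (xplus : EuclideanSpace ℝ (Fin d)) (hx : xplus = x - η • gradient f x)
    (hlb : ℓstar ≤ f xplus) (hinc : f ω - ℓstar ≤ ε) :
    ‖xplus - ω‖ ^ 2 ≤ (1 - μ / L) * ‖x - ω‖ ^ 2 + 2 * η * ε := by
  set g := gradient f x with hg
  have hη0 : 0 < η := by rw [hη]; positivity
  have hηL : η * L = 1 := by rw [hη]; field_simp
  -- expansion of the squared distance
  have h1 : xplus - ω = (x - ω) - η • g := by rw [hx]; abel
  have hexp : ‖xplus - ω‖ ^ 2
      = ‖x - ω‖ ^ 2 - 2 * (η * ⟪x - ω, g⟫) + η ^ 2 * ‖g‖ ^ 2 := by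
    rw [h1, @norm_sub_sq_real, real_inner_smul_right, norm_smul]
    simp [abs_of_pos hη0, mul_pow]
  -- smoothness at xplus, x
  have hsm := hsmooth xplus x
  have h2 : xplus - x = -(η • g) := by rw [hx]; abel
  have hsm' : f xplus ≤ f x - η * ‖g‖ ^ 2 + (L / 2) * (η ^ 2 * ‖g‖ ^ 2) := by
    rw [h2] at hsm
    rw [inner_neg_left, real_inner_smul_left, real_inner_self_eq_norm_sq,
      norm_neg, norm_smul] at hsm
    calc f xplus ≤ f x + -(η * ‖g‖ ^ 2) + L / 2 * (‖η‖ * ‖g‖) ^ 2 := hsm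
      _ = f x - η * ‖g‖ ^ 2 + (L / 2) * (η ^ 2 * ‖g‖ ^ 2) := by
          rw [Real.norm_eq_abs, abs_of_pos hη0]; ring
  have hconv' : -⟪x - ω, g⟫ ≤ f ω - f x - (μ / 2) * ‖x - ω‖ ^ 2 := by
    have : ω - x = -(x - ω) := by abel
    rw [this, inner_neg_left] at hconv
    exact hconv
  have hfin : f ω - f xplus ≤ ε := by linarith
  -- combine
  rw [hexp]
  have hη2L : η ^ 2 * L = η := by
    calc η ^ 2 * L = η * (η * L) := by ring
      _ = η := by rw [hηL]; ring
  have hrw : L / 2 * (η ^ 2 * ‖g‖ ^ 2) = η / 2 * ‖g‖ ^ 2 := by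
    calc L / 2 * (η ^ 2 * ‖g‖ ^ 2) = (η ^ 2 * L) * ‖g‖ ^ 2 / 2 := by ring
      _ = η / 2 * ‖g‖ ^ 2 := by rw [hη2L]; ring
  have h3 : η / 2 * ‖g‖ ^ 2 ≤ f x - f xplus := by linarith [hsm'.trans_eq (by rw [hrw])]
  have h4 := mul_le_mul_of_nonneg_left h3 hη0.le
  have key : η ^ 2 * ‖g‖ ^ 2 ≤ 2 * η * (f x - f xplus) := by nlinarith [h4]
  have h7 := mul_le_mul_of_nonneg_left hconv' hη0.le
  have h5 := mul_le_mul_of_nonneg_left hfin hη0.le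
  have hμη : η * μ = μ / L := by rw [hη]; field_simp
  have h6 : η * (μ / 2 * ‖x - ω‖ ^ 2) = μ / L * ‖x - ω‖ ^ 2 / 2 := by
    rw [← hμη]; ring
  linarith [h7, h5, h6, key]
end

section
/- Let μ₁,...,μₙ ∈ [0, L] with L > 0 and μ̄ = (1/n)∑ᵢ μᵢ > 0, and set α = ∏_{i=1}^n (1 − μᵢ/L). Suppose M̄ ≤ ∑_{k=0}^{n−1} (1 − μ̄/L)^{n−k−1}. Then 2εM̄ / (L(1−α)) ≤ 2ε/μ̄ for any ε ≥ 0. -/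
theorem stmt_5 (n : ℕ) (hn : 0 < n) (L : ℝ) (hL : 0 < L) (μ : Fin n → ℝ)
    (hμ0 : ∀ i, 0 ≤ μ i) (hμL : ∀ i, μ i ≤ L)
    (μbar : ℝ) (hμbar : μbar = (∑ i, μ i) / n) (hμbarpos : 0 < μbar)
    (α : ℝ) (hα : α = ∏ i, (1 - μ i / L))
    (M : ℝ) (hM : M ≤ ∑ k ∈ Finset.range n, (1 - μbar / L) ^ (n - k - 1))
    (ε : ℝ) (hε : 0 ≤ ε) :
    2 * ε * M / (L * (1 - α)) ≤ 2 * ε / μbar := by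
  have hn' : (0:ℝ) < n := by exact_mod_cast hn
  set r : ℝ := 1 - μbar / L with hr
  have hμbarL : μbar ≤ L := by
    rw [hμbar, div_le_iff₀ hn']
    calc (∑ i, μ i) ≤ ∑ _i : Fin n, L := Finset.sum_le_sum fun i _ => hμL i
    _ = L * n := by simp [mul_comm]
  have hr0 : 0 ≤ r := by
    have : μbar / L ≤ 1 := div_le_one_of_le₀ hμbarL hL.le
    simp only [hr]; linarith
  have hr1 : r < 1 := by
    have : 0 < μbar / L := div_pos hμbarpos hL
    simp only [hr]; linarith
  have hz0 : ∀ i : Fin n, (0:ℝ) ≤ 1 - μ i / L := fun i => by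
    have : μ i / L ≤ 1 := div_le_one_of_le₀ (hμL i) hL.le
    linarith
  -- AM-GM: α ≤ r ^ n
  have hamgm : α ≤ r ^ n := by
    have hw : ∑ _i : Fin n, (n:ℝ)⁻¹ = 1 := by
      simp [Finset.sum_const]
      exact mul_inv_cancel₀ (ne_of_gt hn')
    have h := Real.geom_mean_le_arith_mean_weighted Finset.univ
      (fun _ => (n:ℝ)⁻¹) (fun i => 1 - μ i / L)
      (fun i _ => by positivity) hw (fun i _ => hz0 i)
    have hrhs : ∑ i : Fin n, (n:ℝ)⁻¹ * (1 - μ i / L) = r := by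
      rw [← Finset.mul_sum]
      have : ∑ i : Fin n, (1 - μ i / L) = n - (∑ i, μ i) / L := by
        rw [Finset.sum_sub_distrib]
        simp [Finset.sum_div]
      rw [this, hr, hμbar]
      field_simp
    rw [hrhs] at h
    have h2 : (∏ i : Fin n, (1 - μ i / L) ^ ((n:ℝ)⁻¹)) ^ n ≤ r ^ n :=
      pow_le_pow_left₀ (Finset.prod_nonneg fun i _ => Real.rpow_nonneg (hz0 i) _) h n
    calc α = ∏ i : Fin n, ((1 - μ i / L) ^ ((n:ℝ)⁻¹)) ^ n := by
            rw [hα]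
            exact Finset.prod_congr rfl fun i _ =>
              (Real.rpow_inv_natCast_pow (hz0 i) hn.ne').symm
      _ = (∏ i : Fin n, (1 - μ i / L) ^ ((n:ℝ)⁻¹)) ^ n := Finset.prod_pow _ _ _
      _ ≤ r ^ n := h2
  have hα1 : α < 1 := lt_of_le_of_lt hamgm (pow_lt_one₀ hr0 hr1 hn.ne')
  have hden : 0 < L * (1 - α) := mul_pos hL (by linarith)
  -- the geometric sum
  have hsum : ∑ k ∈ Finset.range n, r ^ (n - k - 1) = (1 - r ^ n) / (μbar / L) := by
    have h1 : ∑ k ∈ Finset.range n, r ^ (n - 1 - k) = ∑ k ∈ Finset.range n, r ^ k :=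
      Finset.sum_range_reflect (fun k => r ^ k) n
    have h2 : ∀ k, n - k - 1 = n - 1 - k := fun k => by omega
    simp only [h2]
    rw [h1, geom_sum_eq (by linarith : r ≠ 1)]
    rw [hr]
    have hμL' : μbar / L ≠ 0 := ne_of_gt (div_pos hμbarpos hL)
    field_simp
    rw [show L - μbar - L = -μbar by ring, mul_div_right_comm, div_neg, div_self hμbarpos.ne']; ring
  have hMle : M ≤ (1 - α) / (μbar / L) := by
    refine hM.trans ?_
    rw [hsum]
    gcongr
  -- finish
  rw [div_le_div_iff₀ hden hμbarpos]
  have h1 : 2 * ε * M ≤ 2 * ε * ((1 - α) / (μbar / L)) :=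
    mul_le_mul_of_nonneg_left hMle (by linarith)
  calc 2 * ε * M * μbar ≤ 2 * ε * ((1 - α) / (μbar / L)) * μbar :=
        mul_le_mul_of_nonneg_right h1 hμbarpos.le
    _ = 2 * ε * (L * (1 - α)) := by
        field_simp
end

section
/- Let each ℓᵢ : ℝᵈ → ℝ (i = 1,...,n) be L-smooth and satisfy ℓᵢ(ω) ≥ ℓᵢ(x) + ⟨ω−x, ∇ℓᵢ(x)⟩ + (μᵢ/2)‖x−ω‖² for all x ∈ ℝᵈ and all ω in a common nonempty set Θ* on which each ℓᵢ attains its global minimum, with 0 ≤ μᵢ ≤ L. Let σ be a permutation of {1,...,n} and define θ₀ ∈ ℝᵈ, θₖ₊₁ = θₖ − (1/L)∇ℓ_{σ(k)}(θₖ) for k = 0,...,n−1. Then for every ω ∈ Θ*, ‖θₙ − ω‖² ≤ ∏_{i=1}^n (1 − μᵢ/L) · ‖θ₀ − ω‖². -/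
open RealInnerProductSpace

lemma step_contract {d : ℕ} (f : EuclideanSpace ℝ (Fin d) → ℝ) (L μ : ℝ) (hL : 0 < L)
    (θ ω : EuclideanSpace ℝ (Fin d))
    (hsm : ∀ x y, f x ≤ f y + ⟪x - y, gradient f y⟫ + (L / 2) * ‖x - y‖ ^ 2)
    (hmin : ∀ y, f ω ≤ f y)
    (hcv : f ω ≥ f θ + ⟪ω - θ, gradient f θ⟫ + (μ / 2) * ‖θ - ω‖ ^ 2) :
    ‖θ - (1 / L) • gradient f θ - ω‖ ^ 2 ≤ (1 - μ / L) * ‖θ - ω‖ ^ 2 := by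
  set g := gradient f θ with hg
  -- smoothness gives descent
  have h1 : f (θ - (1 / L) • g) ≤ f θ - (1 / (2 * L)) * ‖g‖ ^ 2 := by
    have := hsm (θ - (1 / L) • g) θ
    have he : θ - (1 / L) • g - θ = -((1 / L) • g) := by abel
    rw [he] at this
    rw [inner_neg_left, real_inner_smul_left, real_inner_self_eq_norm_sq] at this
    rw [norm_neg, norm_smul] at this
    have : f (θ - (1 / L) • g) ≤ f θ + -(1 / L * ‖g‖ ^ 2) + L / 2 * (‖(1:ℝ)/L‖ * ‖g‖) ^ 2 := this
    have hn : ‖(1:ℝ)/L‖ = 1 / L := abs_of_pos (by positivity)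
    rw [hn] at this
    have hL' : L ≠ 0 := ne_of_gt hL
    have he2 : L / 2 * (1 / L * ‖g‖) ^ 2 = 1 / (2 * L) * ‖g‖ ^ 2 := by
      field_simp
    have he3 : 1 / L * ‖g‖ ^ 2 = 2 * (1 / (2 * L) * ‖g‖ ^ 2) := by
      field_simp
    linarith [this, he2.le, he2.ge, he3.le, he3.ge]
  have h2 : f ω ≤ f (θ - (1 / L) • g) := hmin _
  -- key inner product bound
  have hkey : ⟪θ - ω, g⟫ ≥ (μ / 2) * ‖θ - ω‖ ^ 2 + (1 / (2 * L)) * ‖g‖ ^ 2 := by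
    have hio : ⟪ω - θ, g⟫ = -⟪θ - ω, g⟫ := by
      rw [show ω - θ = -(θ - ω) by abel, inner_neg_left]
    nlinarith [hcv, h1, h2, hio]
  -- expand the square
  have hexp : ‖θ - (1 / L) • g - ω‖ ^ 2
      = ‖θ - ω‖ ^ 2 - 2 * ((1 / L) * ⟪θ - ω, g⟫) + (1 / L) ^ 2 * ‖g‖ ^ 2 := by
    have he : θ - (1 / L) • g - ω = (θ - ω) - (1 / L) • g := by abel
    rw [he, norm_sub_sq_real, real_inner_smul_right, norm_smul]
    have hn : ‖(1:ℝ)/L‖ = 1 / L := abs_of_pos (by positivity)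
    rw [hn]; ring
  rw [hexp]
  have hLinv : (0:ℝ) < 1 / L := by positivity
  have hmul := mul_le_mul_of_nonneg_left hkey (le_of_lt hLinv)
  have e1 : 1 / L * (μ / 2 * ‖θ - ω‖ ^ 2 + 1 / (2 * L) * ‖g‖ ^ 2)
      = (μ / L) * ‖θ - ω‖ ^ 2 / 2 + (1 / L) ^ 2 * ‖g‖ ^ 2 / 2 := by
    field_simp
  rw [e1] at hmul
  linarith

theorem stmt_12 (d n : ℕ) (ℓ : Fin n → EuclideanSpace ℝ (Fin d) → ℝ)
    (L : ℝ) (hL : 0 < L) (μ : Fin n → ℝ) (hμ0 : ∀ i, 0 ≤ μ i) (hμL : ∀ i, μ i ≤ L)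
    (hdiff : ∀ i, Differentiable ℝ (ℓ i))
    (hsmooth : ∀ i x y, ℓ i x ≤ ℓ i y + ⟪x - y, gradient (ℓ i) y⟫ + (L / 2) * ‖x - y‖ ^ 2)
    (Θstar : Set (EuclideanSpace ℝ (Fin d))) (hΘne : Θstar.Nonempty)
    (hmin : ∀ i, ∀ ω ∈ Θstar, ∀ y, ℓ i ω ≤ ℓ i y)
    (hconv : ∀ i, ∀ x, ∀ ω ∈ Θstar,
      ℓ i ω ≥ ℓ i x + ⟪ω - x, gradient (ℓ i) x⟫ + (μ i / 2) * ‖x - ω‖ ^ 2)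
    (σ : Equiv.Perm (Fin n)) (θ : ℕ → EuclideanSpace ℝ (Fin d))
    (hrec : ∀ k : Fin n, θ (k.val + 1) = θ k.val - (1 / L) • gradient (ℓ (σ k)) (θ k.val)) :
    ∀ ω ∈ Θstar, ‖θ n - ω‖ ^ 2 ≤ (∏ i, (1 - μ i / L)) * ‖θ 0 - ω‖ ^ 2 := by
  intro ω hω
  set c : ℕ → ℝ := fun i => if h : i < n then 1 - μ (σ ⟨i, h⟩) / L else 1 with hc
  have hc01 : ∀ i, 0 ≤ c i ∧ c i ≤ 1 := by
    intro i
    simp only [hc]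
    split
    · constructor
      · have := hμL (σ ⟨i, by assumption⟩)
        have h2 : μ (σ ⟨i, by assumption⟩) / L ≤ 1 := (div_le_one hL).mpr this
        linarith
      · have := hμ0 (σ ⟨i, by assumption⟩)
        have : 0 ≤ μ (σ ⟨i, by assumption⟩) / L := div_nonneg this hL.le
        linarith
    · exact ⟨zero_le_one, le_refl 1⟩
  have main : ∀ k, k ≤ n →
      ‖θ k - ω‖ ^ 2 ≤ (∏ i ∈ Finset.range k, c i) * ‖θ 0 - ω‖ ^ 2 := by
    intro k
    induction k with
    | zero => intro _; simp
    | succ k ih =>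
      intro hkn
      have hk : k < n := hkn
      have ihk := ih hk.le
      have hstep : ‖θ (k + 1) - ω‖ ^ 2 ≤ c k * ‖θ k - ω‖ ^ 2 := by
        have hrec' := hrec ⟨k, hk⟩
        simp only at hrec'
        rw [hrec']
        have := step_contract (ℓ (σ ⟨k, hk⟩)) L (μ (σ ⟨k, hk⟩)) hL (θ k) ω
          (hsmooth (σ ⟨k, hk⟩)) (hmin (σ ⟨k, hk⟩) ω hω)
          (hconv (σ ⟨k, hk⟩) (θ k) ω hω)
        simpa [hc, hk] using this
      rw [Finset.prod_range_succ]
      have hck : 0 ≤ c k := (hc01 k).1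
      calc ‖θ (k + 1) - ω‖ ^ 2 ≤ c k * ‖θ k - ω‖ ^ 2 := hstep
        _ ≤ c k * ((∏ i ∈ Finset.range k, c i) * ‖θ 0 - ω‖ ^ 2) :=
            mul_le_mul_of_nonneg_left ihk hck
        _ = (∏ i ∈ Finset.range k, c i) * c k * ‖θ 0 - ω‖ ^ 2 := by ring
  have hfin := main n le_rfl
  have hprod : ∏ i ∈ Finset.range n, c i = ∏ i, (1 - μ i / L) := by
    rw [← Fin.prod_univ_eq_prod_range c n]
    rw [← Equiv.prod_comp σ (fun i => 1 - μ i / L)]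
    apply Finset.prod_congr rfl
    intro i _
    simp [hc, i.isLt]
  rwa [hprod] at hfin
end

section
/- Let each ℓᵢ : ℝᵈ → ℝ be L-smooth and satisfy ℓᵢ(ω) ≥ ℓᵢ(x) + ⟨ω−x, ∇ℓᵢ(x)⟩ + (μᵢ/2)‖x−ω‖² for all x and for ω ∈ Θ* with ℓᵢ(ω) − inf ℓᵢ ≤ ε, where 0 ≤ μᵢ ≤ L and ε ≥ 0. Let σ be a permutation of {1,...,n}, η = 1/L, θₖ₊₁ = θₖ − η∇ℓ_{σ(k)}(θₖ). Then ‖θₙ − ω‖² ≤ ∏_{i=1}^n (1 − μᵢ/L) · ‖θ₀ − ω‖² + 2ηε ∑_{k=0}^{n−1} ∏_{s=k+1}^{n−1} (1 − μ_{σ(s)}/L). -/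
open RealInnerProductSpace

theorem stmt_13 (d n : ℕ) (ℓ : Fin n → EuclideanSpace ℝ (Fin d) → ℝ)
    (L ε : ℝ) (hL : 0 < L) (hε : 0 ≤ ε)
    (μ : Fin n → ℝ) (hμ0 : ∀ i, 0 ≤ μ i) (hμL : ∀ i, μ i ≤ L)
    (hdiff : ∀ i, Differentiable ℝ (ℓ i))
    (hsmooth : ∀ i x y, ℓ i x ≤ ℓ i y + ⟪x - y, gradient (ℓ i) y⟫ + (L / 2) * ‖x - y‖ ^ 2)
    (ω : EuclideanSpace ℝ (Fin d)) (ℓstar : Fin n → ℝ)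
    (hlb : ∀ i x, ℓstar i ≤ ℓ i x)
    (hinc : ∀ i, ℓ i ω - ℓstar i ≤ ε)
    (hconv : ∀ i x, ℓ i ω ≥ ℓ i x + ⟪ω - x, gradient (ℓ i) x⟫ + (μ i / 2) * ‖x - ω‖ ^ 2)
    (σ : Equiv.Perm (Fin n)) (η : ℝ) (hη : η = 1 / L)
    (θ : ℕ → EuclideanSpace ℝ (Fin d))
    (hrec : ∀ k : Fin n, θ (k.val + 1) = θ k.val - η • gradient (ℓ (σ k)) (θ k.val)) :
    ‖θ n - ω‖ ^ 2 ≤ (∏ i, (1 - μ i / L)) * ‖θ 0 - ω‖ ^ 2 +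
      2 * η * ε * ∑ k ∈ Finset.range n,
        ∏ s ∈ Finset.univ.filter (fun s : Fin n => k < s.val), (1 - μ (σ s) / L) := by
  have hη0 : 0 < η := by rw [hη]; positivity
  have hηL : η * L = 1 := by rw [hη]; field_simp
  -- per-step inequality
  have step : ∀ k : Fin n, ‖θ (k.val + 1) - ω‖ ^ 2 ≤
      (1 - μ (σ k) / L) * ‖θ k.val - ω‖ ^ 2 + 2 * η * ε := by
    intro k
    set g := gradient (ℓ (σ k)) (θ k.val) with hg
    have hθ := hrec k
    -- smoothness bound on gradient norm
    have hgsq : η ^ 2 * ‖g‖ ^ 2 ≤ 2 * η * (ℓ (σ k) (θ k.val) - ℓstar (σ k)) := by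
      have hs := hsmooth (σ k) (θ (k.val + 1)) (θ k.val)
      have hd : θ (k.val + 1) - θ k.val = -(η • g) := by rw [hθ]; abel
      rw [hd] at hs
      have h1 : ⟪-(η • g), g⟫ = -(η * ‖g‖ ^ 2) := by
        rw [inner_neg_left, real_inner_smul_left, real_inner_self_eq_norm_sq]
      have h2 : ‖-(η • g)‖ ^ 2 = η ^ 2 * ‖g‖ ^ 2 := by
        rw [norm_neg, norm_smul, mul_pow, Real.norm_eq_abs, sq_abs]
      rw [h1, h2] at hs
      have hlow := hlb (σ k) (θ (k.val + 1))
      nlinarith [sq_nonneg ‖g‖, hη0, hL]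
    -- convexity bound on inner product
    have hc := hconv (σ k) (θ k.val)
    have hip : ⟪θ k.val - ω, g⟫ = -⟪ω - θ k.val, g⟫ := by
      rw [← inner_neg_left]; congr 1; abel
    -- expansion
    have hexp : ‖θ (k.val + 1) - ω‖ ^ 2 =
        ‖θ k.val - ω‖ ^ 2 - 2 * η * ⟪θ k.val - ω, g⟫ + η ^ 2 * ‖g‖ ^ 2 := by
      have hd : θ (k.val + 1) - ω = (θ k.val - ω) - η • g := by rw [hθ]; abel
      rw [hd, norm_sub_sq_real, real_inner_smul_right, norm_smul, mul_pow,
        Real.norm_eq_abs, sq_abs]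
      ring
    have hμη : μ (σ k) / L = μ (σ k) * η := by rw [hη]; ring
    rw [hμη]
    have hie := hinc (σ k)
    nlinarith [mul_le_mul_of_nonneg_left hie hη0.le,
      mul_le_mul_of_nonneg_left (le_of_eq hip) hη0.le, sq_nonneg ‖θ k.val - ω‖,
      mul_nonneg (mul_nonneg hη0.le (hμ0 (σ k))) (sq_nonneg ‖θ k.val - ω‖)]
  -- contraction coefficients as a function on ℕ
  set c : ℕ → ℝ := fun s => if h : s < n then 1 - μ (σ ⟨s, h⟩) / L else 1 with hc
  have hcval : ∀ (s : ℕ) (h : s < n), c s = 1 - μ (σ ⟨s, h⟩) / L := by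
    intro s h; simp [hc, h]
  have hc0 : ∀ s, 0 ≤ c s := by
    intro s
    by_cases h : s < n
    · rw [hcval s h]
      have : μ (σ ⟨s, h⟩) / L ≤ 1 := (div_le_one hL).2 (hμL _)
      linarith
    · simp [hc, h]
  -- main induction
  have main : ∀ k, k ≤ n → ‖θ k - ω‖ ^ 2 ≤ (∏ s ∈ Finset.range k, c s) * ‖θ 0 - ω‖ ^ 2 +
      2 * η * ε * ∑ j ∈ Finset.range k, ∏ s ∈ Finset.Ico (j + 1) k, c s := by
    intro k
    induction k with
    | zero => simp
    | succ k ih =>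
      intro hk
      have hkn : k < n := hk
      have ih' := ih hkn.le
      have hstep := step ⟨k, hkn⟩
      rw [← hcval k hkn] at hstep
      have hS : ∑ j ∈ Finset.range (k + 1), ∏ s ∈ Finset.Ico (j + 1) (k + 1), c s =
          (∑ j ∈ Finset.range k, ∏ s ∈ Finset.Ico (j + 1) k, c s) * c k + 1 := by
        rw [Finset.sum_range_succ, Finset.Ico_self, Finset.prod_empty, Finset.sum_mul]
        congr 1
        refine Finset.sum_congr rfl fun j hj => ?_
        have hjk : j + 1 ≤ k := Finset.mem_range.1 hj
        rw [Finset.prod_Ico_succ_top hjk]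
      calc ‖θ (k + 1) - ω‖ ^ 2 ≤ c k * ‖θ k - ω‖ ^ 2 + 2 * η * ε := hstep
        _ ≤ c k * ((∏ s ∈ Finset.range k, c s) * ‖θ 0 - ω‖ ^ 2 +
              2 * η * ε * ∑ j ∈ Finset.range k, ∏ s ∈ Finset.Ico (j + 1) k, c s)
              + 2 * η * ε := by
            have := mul_le_mul_of_nonneg_left ih' (hc0 k)
            linarith
        _ = (∏ s ∈ Finset.range (k + 1), c s) * ‖θ 0 - ω‖ ^ 2 +
              2 * η * ε * ∑ j ∈ Finset.range (k + 1), ∏ s ∈ Finset.Ico (j + 1) (k + 1), c s := by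
            rw [Finset.prod_range_succ, hS]; ring
  have hmain := main n le_rfl
  -- convert products
  have hP : ∏ s ∈ Finset.range n, c s = ∏ i, (1 - μ i / L) := by
    rw [← Fin.prod_univ_eq_prod_range c n]
    rw [← Equiv.prod_comp σ (fun i => 1 - μ i / L)]
    refine Finset.prod_congr rfl fun i _ => ?_
    rw [hcval i.val i.isLt]
  have hSS : ∀ j, (∏ s ∈ Finset.Ico (j + 1) n, c s) =
      ∏ s ∈ Finset.univ.filter (fun s : Fin n => j < s.val), (1 - μ (σ s) / L) := by
    intro j
    have h1 : Finset.Ico (j + 1) n = (Finset.range n).filter (fun s => j < s) := by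
      ext a; simp [Finset.mem_Ico, Finset.mem_filter, Finset.mem_range]; omega
    rw [h1, Finset.prod_filter, ← Fin.prod_univ_eq_prod_range (fun m => if j < m then c m else 1) n,
      Finset.prod_filter]
    refine Finset.prod_congr rfl fun s _ => ?_
    by_cases h : j < s.val
    · simp only [h, if_true]
      rw [hcval s.val s.isLt]
    · simp [h]
  rw [hP] at hmain
  refine hmain.trans (le_of_eq ?_)
  congr 1
  refine congrArg _ (Finset.sum_congr rfl fun j _ => ?_)
  exact hSS j
end

section
/- Let x₁,...,xₙ ∈ [0,1] and let S denote the expected value of ∏_{j∈J} xⱼ when J is a uniformly random subset of {1,...,n} of fixed size m (0 ≤ m ≤ n). Then S ≤ x̄^m where x̄ = (1/n)∑ᵢ xᵢ. -/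
open Finset

private lemma esum_nonneg {n : ℕ} (x : Fin n → ℝ) (hx0 : ∀ i, 0 ≤ x i)
    (s : Finset (Fin n)) (r : ℕ) :
    0 ≤ ∑ J ∈ s.powersetCard r, ∏ j ∈ J, x j :=
  Finset.sum_nonneg fun J _ => Finset.prod_nonneg fun j _ => hx0 j

private lemma esum_insert {n : ℕ} (x : Fin n → ℝ) {a : Fin n} {s : Finset (Fin n)}
    (h : a ∉ s) (r : ℕ) :
    ∑ J ∈ (insert a s).powersetCard (r + 1), ∏ j ∈ J, x j
      = (∑ J ∈ s.powersetCard (r + 1), ∏ j ∈ J, x j)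
        + x a * ∑ J ∈ s.powersetCard r, ∏ j ∈ J, x j := by
  rw [Finset.powersetCard_succ_insert h]
  rw [Finset.sum_union ?hdisj]
  · rw [Finset.sum_image ?hinj]
    · rw [Finset.mul_sum]
      congr 1
      refine Finset.sum_congr rfl fun K hK => ?_
      have hKs : K ⊆ s := (Finset.mem_powersetCard.mp hK).1
      have haK : a ∉ K := fun hc => h (hKs hc)
      rw [Finset.prod_insert haK]
    · intro K hK K' hK' hEq
      have haK : a ∉ K := fun hc => h ((Finset.mem_powersetCard.mp hK).1 hc)
      have haK' : a ∉ K' := fun hc => h ((Finset.mem_powersetCard.mp hK').1 hc)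
      rw [← Finset.erase_insert haK, hEq, Finset.erase_insert haK']
  · rw [Finset.disjoint_left]
    intro J hJ hJ'
    obtain ⟨K, hK, rfl⟩ := Finset.mem_image.mp hJ'
    exact h ((Finset.mem_powersetCard.mp hJ).1 (Finset.mem_insert_self a K))

private lemma pc_filter_mem {n : ℕ} {s : Finset (Fin n)} {i : Fin n} (hi : i ∈ s) (m : ℕ) :
    (s.powersetCard (m + 1)).filter (fun J => i ∈ J)
      = ((s.erase i).powersetCard m).image (insert i) := by
  ext J
  simp only [Finset.mem_filter, Finset.mem_powersetCard, Finset.mem_image]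
  constructor
  · rintro ⟨⟨hJs, hcard⟩, hiJ⟩
    refine ⟨J.erase i, ⟨Finset.erase_subset_erase i hJs, ?_⟩, Finset.insert_erase hiJ⟩
    rw [Finset.card_erase_of_mem hiJ, hcard]
    omega
  · rintro ⟨K, ⟨hKs, hKcard⟩, rfl⟩
    obtain ⟨hKs', hiK⟩ := Finset.subset_erase.mp hKs
    refine ⟨⟨Finset.insert_subset hi hKs', ?_⟩, Finset.mem_insert_self i K⟩
    rw [Finset.card_insert_of_notMem hiK, hKcard]

private lemma pc_erase {n : ℕ} (s : Finset (Fin n)) (i : Fin n) (m : ℕ) :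
    (s.erase i).powersetCard m = (s.powersetCard m).filter (fun K => i ∉ K) := by
  ext K
  simp only [Finset.mem_powersetCard, Finset.mem_filter, Finset.subset_erase]
  tauto

/-- `(m+1) e_{m+1}(s) = ∑_{i∈s} x_i e_m(s \ {i})`. -/
private lemma identity1 {n : ℕ} (x : Fin n → ℝ) (s : Finset (Fin n)) (m : ℕ) :
    ((m : ℝ) + 1) * ∑ J ∈ s.powersetCard (m + 1), ∏ j ∈ J, x j
      = ∑ i ∈ s, x i * ∑ K ∈ (s.erase i).powersetCard m, ∏ j ∈ K, x j := by
  rw [Finset.mul_sum]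
  have lhs_eq : ∀ J ∈ s.powersetCard (m + 1),
      ((m : ℝ) + 1) * ∏ j ∈ J, x j
        = ∑ i ∈ s, if i ∈ J then x i * ∏ j ∈ J.erase i, x j else 0 := by
    intro J hJ
    obtain ⟨hJs, hcard⟩ := Finset.mem_powersetCard.mp hJ
    rw [Finset.sum_ite_mem, Finset.inter_eq_right.mpr hJs]
    have : ∀ i ∈ J, x i * ∏ j ∈ J.erase i, x j = ∏ j ∈ J, x j := fun i hi =>
      Finset.mul_prod_erase J x hi
    rw [Finset.sum_congr rfl this, Finset.sum_const, hcard, nsmul_eq_mul]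
    push_cast
    ring
  rw [Finset.sum_congr rfl lhs_eq, Finset.sum_comm]
  refine Finset.sum_congr rfl fun i hi => ?_
  rw [Finset.sum_ite, Finset.sum_const_zero, add_zero, pc_filter_mem hi m,
    Finset.sum_image ?inj]
  · rw [Finset.mul_sum]
    refine Finset.sum_congr rfl fun K hK => ?_
    have hiK : i ∉ K :=
      (Finset.subset_erase.mp (Finset.mem_powersetCard.mp hK).1).2
    rw [Finset.erase_insert hiK]
  · intro K hK K' hK' hEq
    have hiK : i ∉ K := (Finset.subset_erase.mp (Finset.mem_powersetCard.mp hK).1).2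
    have hiK' : i ∉ K' := (Finset.subset_erase.mp (Finset.mem_powersetCard.mp hK').1).2
    rw [← Finset.erase_insert hiK, hEq, Finset.erase_insert hiK']

/-- `∑_{i∈s} e_m(s \ {i}) = (|s| - m) e_m(s)`. -/
private lemma identity2 {n : ℕ} (x : Fin n → ℝ) (s : Finset (Fin n)) (m : ℕ) :
    ∑ i ∈ s, ∑ K ∈ (s.erase i).powersetCard m, ∏ j ∈ K, x j
      = ((s.card - m : ℕ) : ℝ) * ∑ K ∈ s.powersetCard m, ∏ j ∈ K, x j := by
  have : ∀ i ∈ s, ∑ K ∈ (s.erase i).powersetCard m, ∏ j ∈ K, x j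
      = ∑ K ∈ s.powersetCard m, if i ∉ K then ∏ j ∈ K, x j else 0 := by
    intro i _
    rw [pc_erase, Finset.sum_filter]
  rw [Finset.sum_congr rfl this, Finset.sum_comm, Finset.mul_sum]
  refine Finset.sum_congr rfl fun K hK => ?_
  obtain ⟨hKs, hcard⟩ := Finset.mem_powersetCard.mp hK
  rw [← Finset.sum_filter]
  have : s.filter (fun i => i ∉ K) = s \ K := (Finset.sdiff_eq_filter s K).symm
  rw [this, Finset.sum_const, Finset.card_sdiff_of_subset hKs, hcard, nsmul_eq_mul]

theorem stmt_14 (n m : ℕ) (hn : 0 < n) (hm : m ≤ n) (x : Fin n → ℝ)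
    (hx0 : ∀ i, 0 ≤ x i) (hx1 : ∀ i, x i ≤ 1) :
    (∑ J ∈ Finset.powersetCard m (Finset.univ : Finset (Fin n)), ∏ j ∈ J, x j) /
        (n.choose m : ℝ)
      ≤ ((∑ i, x i) / n) ^ m := by
  induction m with
  | zero => simp
  | succ m ih =>
    have hm' : m ≤ n := Nat.le_of_succ_le hm
    have IH := ih hm'
    set A : ℝ := ∑ i, x i with hA
    have hA0 : 0 ≤ A := Finset.sum_nonneg fun i _ => hx0 i
    set g : Fin n → ℝ := fun i =>
      ∑ K ∈ ((Finset.univ : Finset (Fin n)).erase i).powersetCard m, ∏ j ∈ K, x j with hg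
    -- antivariance of x and g
    have hanti : AntivaryOn x g (Finset.univ : Finset (Fin n)) := by
      intro i _ j _ hlt
      by_contra hc
      push_neg at hc
      have hij : i ≠ j := by rintro rfl; exact lt_irrefl _ hlt
      cases m with
      | zero =>
        simp [hg] at hlt
      | succ m' =>
        set t : Finset (Fin n) :=
          (((Finset.univ : Finset (Fin n)).erase i).erase j) with ht
        have hjt : j ∉ t := Finset.notMem_erase j _
        have hit : i ∉ t := by
          rw [ht, Finset.erase_right_comm]
          exact Finset.notMem_erase i _
        have hins_j : insert j t = (Finset.univ : Finset (Fin n)).erase i := by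
          apply Finset.insert_erase
          simp [Ne.symm hij]
        have hins_i : insert i t = (Finset.univ : Finset (Fin n)).erase j := by
          rw [ht, Finset.erase_right_comm]
          apply Finset.insert_erase
          simp [hij]
        have hgi : g i = (∑ J ∈ t.powersetCard (m' + 1), ∏ j' ∈ J, x j')
            + x j * ∑ J ∈ t.powersetCard m', ∏ j' ∈ J, x j' := by
          rw [hg]; simp only []
          rw [← hins_j, esum_insert x hjt]
        have hgj : g j = (∑ J ∈ t.powersetCard (m' + 1), ∏ j' ∈ J, x j')
            + x i * ∑ J ∈ t.powersetCard m', ∏ j' ∈ J, x j' := by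
          rw [hg]; simp only []
          rw [← hins_i, esum_insert x hit]
        have hEnn : 0 ≤ ∑ J ∈ t.powersetCard m', ∏ j' ∈ J, x j' :=
          esum_nonneg x hx0 t m'
        nlinarith [hlt, hc, hEnn]
    -- Chebyshev
    have hcheb := hanti.card_mul_sum_le_sum_mul_sum
    rw [Finset.card_univ, Fintype.card_fin] at hcheb
    have hI1 := identity1 x (Finset.univ : Finset (Fin n)) m
    have hI2 := identity2 x (Finset.univ : Finset (Fin n)) m
    rw [Finset.card_univ, Fintype.card_fin] at hI2
    set Em : ℝ := ∑ J ∈ Finset.powersetCard m (Finset.univ : Finset (Fin n)),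
      ∏ j ∈ J, x j with hEm
    set Em1 : ℝ := ∑ J ∈ Finset.powersetCard (m + 1) (Finset.univ : Finset (Fin n)),
      ∏ j ∈ J, x j with hEm1
    -- key inequality
    have hstar : (n : ℝ) * (((m : ℝ) + 1) * Em1) ≤ A * (((n - m : ℕ) : ℝ) * Em) := by
      calc (n : ℝ) * (((m : ℝ) + 1) * Em1)
          = (n : ℝ) * ∑ i, x i * g i := by rw [hI1]
        _ ≤ (∑ i, x i) * ∑ i, g i := hcheb
        _ = A * (((n - m : ℕ) : ℝ) * Em) := by rw [← hA, hI2]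
    -- positivity facts
    have hc1 : (0 : ℝ) < (n.choose m : ℝ) := by
      exact_mod_cast Nat.choose_pos hm'
    have hc2 : (0 : ℝ) < (n.choose (m + 1) : ℝ) := by
      exact_mod_cast Nat.choose_pos hm
    have hn' : (0 : ℝ) < (n : ℝ) := by exact_mod_cast hn
    have hEm1nn : 0 ≤ Em1 := esum_nonneg x hx0 _ _
    have hEmnn : 0 ≤ Em := esum_nonneg x hx0 _ _
    -- choose identity
    have hcc : (n.choose (m + 1) : ℝ) * ((m : ℝ) + 1)
        = (n.choose m : ℝ) * ((n - m : ℕ) : ℝ) := by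
      have := Nat.choose_succ_right_eq n m
      exact_mod_cast this
    -- reduce goal
    have hgoal : Em1 / (n.choose (m + 1) : ℝ) ≤ (A / n) * (Em / (n.choose m : ℝ)) := by
      rw [div_mul_div_comm, div_le_div_iff₀ hc2 (mul_pos hn' hc1)]
      have h3 : (n : ℝ) * (((m : ℝ) + 1) * Em1) * (n.choose m : ℝ)
          ≤ A * Em * ((n.choose (m + 1) : ℝ) * ((m : ℝ) + 1)) := by
        rw [hcc]
        have := mul_le_mul_of_nonneg_right hstar hc1.le
        nlinarith [this]
      have h4 : (Em1 * ((n : ℝ) * (n.choose m : ℝ))) * ((m : ℝ) + 1)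
          ≤ (A * Em * (n.choose (m + 1) : ℝ)) * ((m : ℝ) + 1) := by nlinarith [h3]
      have hm1pos : (0 : ℝ) < (m : ℝ) + 1 := by positivity
      exact le_of_mul_le_mul_right h4 hm1pos
    calc Em1 / (n.choose (m + 1) : ℝ)
        ≤ (A / n) * (Em / (n.choose m : ℝ)) := hgoal
      _ ≤ (A / n) * (A / n) ^ m := by
          apply mul_le_mul_of_nonneg_left IH (by positivity)
      _ = (A / n) ^ (m + 1) := by rw [pow_succ]; ring
end
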